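/- The function u(x₀) = exp(∫₀^{x₀} √(3x²+1)/(√2(x²+1)) dx) satisfies u(x₀)/x₀^{√(3/2)} → A as x₀ → +∞, where A = exp(∫₀^∞ (√(3x²+1) − √3·x)/(√2(x²+1)) dx). -/

import Mathlib

open Real Filter MeasureTheory

noncomputable def u (a : ℝ) : ℝ :=
  Real.exp (∫ x in (0:ℝ)..a, Real.sqrt (3 * x ^ 2 + 1) / (Real.sqrt 2 * (x ^ 2 + 1)))

noncomputable def gfun (x : ℝ) : ℝ :=
  (Real.sqrt (3 * x ^ 2 + 1) - Real.sqrt 3 * x) / (Real.sqrt 2 * (x ^ 2 + 1))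

lemma denom_pos (x : ℝ) : 0 < Real.sqrt 2 * (x ^ 2 + 1) := by positivity

lemma cont_g : Continuous gfun := by
  apply Continuous.div
  · exact (Real.continuous_sqrt.comp (by continuity)).sub (by continuity)
  · continuity
  · exact fun x => ne_of_gt (denom_pos x)

lemma g_nonneg {x : ℝ} (hx : 0 ≤ x) : 0 ≤ gfun x := by
  apply div_nonneg _ (denom_pos x).le
  have h1 : Real.sqrt 3 * x = Real.sqrt (3 * x ^ 2) := by
    rw [Real.sqrt_mul (by norm_num), Real.sqrt_sq hx]
  rw [sub_nonneg, h1]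
  exact Real.sqrt_le_sqrt (by nlinarith)

lemma g_le (x : ℝ) (hx : 0 ≤ x) : gfun x ≤ 1 / (x ^ 2 + 1) := by
  have h3 : Real.sqrt 3 ^ 2 = 3 := Real.sq_sqrt (by norm_num)
  have h3' : (0:ℝ) ≤ Real.sqrt 3 := Real.sqrt_nonneg 3
  have hnum : Real.sqrt (3 * x ^ 2 + 1) - Real.sqrt 3 * x ≤ 1 := by
    have : Real.sqrt (3 * x ^ 2 + 1) ≤ Real.sqrt 3 * x + 1 := by
      rw [show Real.sqrt 3 * x + 1 = Real.sqrt ((Real.sqrt 3 * x + 1) ^ 2) from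
        (Real.sqrt_sq (by positivity)).symm]
      exact Real.sqrt_le_sqrt (by nlinarith)
    linarith
  apply div_le_div₀ (by norm_num) hnum (by positivity)
  nlinarith [Real.one_le_sqrt.mpr (show (1:ℝ) ≤ 2 by norm_num)]

lemma integrable_g : IntegrableOn gfun (Set.Ici 0) := by
  have hb : IntegrableOn (fun x : ℝ => 1 / (x ^ 2 + 1)) (Set.Ici 0) := by
    have := integrable_inv_one_add_sq
    simpa [one_div, add_comm] using this.integrableOn (s := Set.Ici (0:ℝ))
  apply hb.mono' cont_g.aestronglyMeasurable.restrict
  filter_upwards [ae_restrict_mem measurableSet_Ici] with x hx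
  rw [Real.norm_eq_abs, abs_of_nonneg (g_nonneg hx)]
  exact g_le x hx

lemma nu_eq : Real.sqrt (3 / 2) = Real.sqrt 3 / Real.sqrt 2 :=
  Real.sqrt_div (by norm_num) 2

noncomputable def phi (x : ℝ) : ℝ := Real.sqrt 3 * x / (Real.sqrt 2 * (x ^ 2 + 1))

lemma cont_phi : Continuous phi :=
  Continuous.div (by continuity) (by continuity) (fun x => ne_of_gt (denom_pos x))

lemma integral_phi (a : ℝ) :
    ∫ x in (0:ℝ)..a, phi x =
      Real.sqrt (3 / 2) / 2 * Real.log (a ^ 2 + 1) := by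
  have h2 : (0:ℝ) < Real.sqrt 2 := by positivity
  have key : ∀ x : ℝ, HasDerivAt (fun t => Real.sqrt (3 / 2) / 2 * Real.log (t ^ 2 + 1))
      (phi x) x := by
    intro x
    have h1 : HasDerivAt (fun t : ℝ => t ^ 2 + 1) (2 * x) x := by
      simpa using ((hasDerivAt_pow 2 x).add_const 1)
    have h2' : HasDerivAt (fun t : ℝ => Real.log (t ^ 2 + 1)) (2 * x / (x ^ 2 + 1)) x :=
      h1.log (by positivity)
    have h := h2'.const_mul (Real.sqrt (3 / 2) / 2)
    refine h.congr_deriv ?_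
    symm
    rw [phi, nu_eq]
    have hx1 : (x:ℝ) ^ 2 + 1 ≠ 0 := by positivity
    field_simp
  rw [intervalIntegral.integral_eq_sub_of_hasDerivAt (fun x _ => key x)
    (cont_phi.intervalIntegrable 0 a)]
  simp

lemma integrand_split (x : ℝ) :
    Real.sqrt (3 * x ^ 2 + 1) / (Real.sqrt 2 * (x ^ 2 + 1)) =
      gfun x + phi x := by
  rw [gfun, phi, ← add_div, sub_add_cancel]

/-- u(x₀)/x₀^{√(3/2)} → A as x₀ → +∞, where
    A = exp(∫₀^∞ (√(3x²+1) − √3 x)/(√2(x²+1)) dx). -/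
theorem u_asymptotics :
    Tendsto (fun a : ℝ => u a / Real.rpow a (Real.sqrt (3 / 2))) atTop
      (nhds (Real.exp (∫ x in Set.Ici (0:ℝ),
        (Real.sqrt (3 * x ^ 2 + 1) - Real.sqrt 3 * x) / (Real.sqrt 2 * (x ^ 2 + 1))))) := by
  set ν := Real.sqrt (3 / 2) with hν
  set L := ∫ x in Set.Ici (0:ℝ), gfun x with hL
  have hLe : (∫ x in Set.Ici (0:ℝ),
      (Real.sqrt (3 * x ^ 2 + 1) - Real.sqrt 3 * x) / (Real.sqrt 2 * (x ^ 2 + 1))) = L := rfl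
  rw [hLe]
  -- Tendsto of the truncated integral of g
  have hIoi : IntegrableOn gfun (Set.Ioi 0) := integrable_g.mono_set Set.Ioi_subset_Ici_self
  have hLIoi : L = ∫ x in Set.Ioi (0:ℝ), gfun x := by
    rw [hL, MeasureTheory.integral_Ici_eq_integral_Ioi]
  have T1 : Tendsto (fun a : ℝ => ∫ x in (0:ℝ)..a, gfun x) atTop (nhds L) := by
    rw [hLIoi]
    exact MeasureTheory.intervalIntegral_tendsto_integral_Ioi 0 hIoi tendsto_id
  -- remainder term tends to 0
  have T2 : Tendsto (fun a : ℝ => ν / 2 * Real.log (a ^ 2 + 1) - ν * Real.log a) atTop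
      (nhds 0) := by
    have h1 : Tendsto (fun a : ℝ => 1 + 1 / a ^ 2) atTop (nhds 1) := by
      have : Tendsto (fun a : ℝ => 1 / a ^ 2) atTop (nhds 0) := by
        apply Tendsto.div_atTop tendsto_const_nhds
        exact tendsto_pow_atTop (by norm_num)
      simpa using tendsto_const_nhds.add this
    have h2 : Tendsto (fun a : ℝ => ν / 2 * Real.log (1 + 1 / a ^ 2)) atTop (nhds 0) := by
      have := ((Real.continuousAt_log (by norm_num)).tendsto.comp h1).const_mul (ν / 2)
      simpa using this
    apply h2.congr'
    filter_upwards [eventually_gt_atTop (0:ℝ)] with a ha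
    have ha2 : (0:ℝ) < a ^ 2 := by positivity
    have : Real.log (a ^ 2 + 1) - 2 * Real.log a = Real.log (1 + 1 / a ^ 2) := by
      rw [show (1:ℝ) + 1 / a ^ 2 = (a ^ 2 + 1) / a ^ 2 by field_simp,
        Real.log_div (by positivity) (by positivity), Real.log_pow]
      push_cast; ring
    rw [← this]; ring
  have T : Tendsto (fun a : ℝ => Real.exp ((∫ x in (0:ℝ)..a, gfun x) +
      (ν / 2 * Real.log (a ^ 2 + 1) - ν * Real.log a))) atTop (nhds (Real.exp L)) := by
    have := (T1.add T2)
    rw [add_zero] at this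
    exact (Real.continuous_exp.tendsto L).comp this
  apply T.congr'
  filter_upwards [eventually_gt_atTop (0:ℝ)] with a ha
  have hrpow : Real.rpow a ν = Real.exp (ν * Real.log a) := by
    rw [show Real.rpow a ν = a ^ ν from rfl, Real.rpow_def_of_pos ha, mul_comm]
  have hsplit : (∫ x in (0:ℝ)..a, Real.sqrt (3 * x ^ 2 + 1) / (Real.sqrt 2 * (x ^ 2 + 1))) =
      (∫ x in (0:ℝ)..a, gfun x) + ν / 2 * Real.log (a ^ 2 + 1) := by
    rw [← integral_phi a, ← intervalIntegral.integral_add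
      (cont_g.intervalIntegrable 0 a) (cont_phi.intervalIntegrable 0 a)]
    exact intervalIntegral.integral_congr fun x _ => integrand_split x
  rw [u, hsplit, hrpow, ← Real.exp_sub]
  congr 1
  ring
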